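/- Let 0 ≤ δ < 1/4 and let (H₁, H₂, H₃) be a δ-representation of the sphere by n×n complex matrices. Then replacing any one of the three matrices by its negative flips the sign of the Bott index: bott(−H₁, H₂, H₃) = bott(H₁, −H₂, H₃) = bott(H₁, H₂, −H₃) = −bott(H₁, H₂, H₃) (each of these triples is again a δ-representation of the sphere, so the indices are defined). -/

import Mathlib

open Matrix

noncomputable section

namespace AC

variable {m : Type*} [Fintype m] [DecidableEq m]

/-- The ℓ² operator norm of a complex matrix. -/
def opNorm (A : Matrix m m ℂ) : ℝ :=
  ‖Matrix.toEuclideanCLM (𝕜 := ℂ) A‖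

/-- `(H₁, H₂, H₃)` is a δ-representation of the sphere: each `Hᵣ` is Hermitian, all
commutators have ℓ²-operator norm at most `δ`, and `‖H₁² + H₂² + H₃² − I‖ ≤ δ`. -/
def IsSphereRep (δ : ℝ) (H₁ H₂ H₃ : Matrix m m ℂ) : Prop :=
  H₁.IsHermitian ∧ H₂.IsHermitian ∧ H₃.IsHermitian ∧
  opNorm (H₁ * H₂ - H₂ * H₁) ≤ δ ∧
  opNorm (H₁ * H₃ - H₃ * H₁) ≤ δ ∧
  opNorm (H₂ * H₃ - H₃ * H₂) ≤ δ ∧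
  opNorm (H₁ ^ 2 + H₂ ^ 2 + H₃ ^ 2 - 1) ≤ δ

/-- The 2n×2n Hermitian block matrix `S(H₁,H₂,H₃) = [[H₃, H₁ − iH₂], [H₁ + iH₂, −H₃]]`. -/
def sphS (H₁ H₂ H₃ : Matrix m m ℂ) : Matrix (m ⊕ m) (m ⊕ m) ℂ :=
  Matrix.fromBlocks H₃ (H₁ - Complex.I • H₂) (H₁ + Complex.I • H₂) (-H₃)

open Classical in
/-- The Bott index: the number of positive eigenvalues (with multiplicity) of
`S(H₁,H₂,H₃)` minus `n`.  (Junk value `0` if `S(H₁,H₂,H₃)` is not Hermitian.) -/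
def bott (H₁ H₂ H₃ : Matrix m m ℂ) : ℤ :=
  if h : (sphS H₁ H₂ H₃).IsHermitian then
    ((Finset.univ.filter fun i => 0 < h.eigenvalues i).card : ℤ) - Fintype.card m
  else 0

end AC


namespace BottNegAux

open Matrix Polynomial
open scoped Matrix.Norms.L2Operator

variable {k : Type*} [Fintype k] [DecidableEq k]
set_option linter.unusedSectionVars false

lemma esum_norm_sq (x : EuclideanSpace ℂ k) : ‖x‖ ^ 2 = ∑ i, ‖x i‖ ^ 2 := by
  rw [EuclideanSpace.norm_eq, Real.sq_sqrt (by positivity)]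

lemma mulvec_norm_le (A : Matrix k k ℂ) (f : k → ℂ) :
    ‖(WithLp.equiv 2 (k → ℂ)).symm (A *ᵥ f)‖ ≤ ‖A‖ * ‖(WithLp.equiv 2 (k → ℂ)).symm f‖ :=
  A.l2_opNorm_mulVec ((WithLp.equiv 2 (k → ℂ)).symm f)

lemma norm_elim_sq (f g : k → ℂ) :
    ‖(WithLp.equiv 2 ((k ⊕ k) → ℂ)).symm (Sum.elim f g)‖ ^ 2 =
      ‖(WithLp.equiv 2 (k → ℂ)).symm f‖ ^ 2 + ‖(WithLp.equiv 2 (k → ℂ)).symm g‖ ^ 2 := by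
  simp only [esum_norm_sq, WithLp.equiv_symm_apply, WithLp.ofLp_toLp, Fintype.sum_sum_type,
    Sum.elim_inl, Sum.elim_inr]

set_option maxHeartbeats 1000000 in
lemma norm_fromBlocks_le (c : ℝ) (A B C D : Matrix k k ℂ)
    (hA : ‖A‖ ≤ c) (hB : ‖B‖ ≤ c) (hC : ‖C‖ ≤ c) (hD : ‖D‖ ≤ c) :
    ‖fromBlocks A B C D‖ ≤ 2 * c := by
  have hc : 0 ≤ c := le_trans (norm_nonneg _) hA
  rw [Matrix.cstar_norm_def]
  refine ContinuousLinearMap.opNorm_le_bound _ (by positivity) fun v => ?_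
  set u : (k ⊕ k) → ℂ := WithLp.equiv 2 _ v with hu
  have hv : v = (WithLp.equiv 2 _).symm u := (Equiv.symm_apply_apply _ v).symm
  rw [hv]
  change ‖(WithLp.equiv 2 _).symm (fromBlocks A B C D *ᵥ u)‖ ≤ 2 * c * ‖(WithLp.equiv 2 _).symm u‖
  rw [← Sum.elim_comp_inl_inr u, fromBlocks_mulVec]
  set f := u ∘ Sum.inl with hfd
  set g := u ∘ Sum.inr with hgd
  have hf := mulvec_norm_le A f
  have hg := mulvec_norm_le B g
  have hf' := mulvec_norm_le C f
  have hg' := mulvec_norm_le D g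
  set nf := ‖(WithLp.equiv 2 (k → ℂ)).symm f‖ with hnf
  set ng := ‖(WithLp.equiv 2 (k → ℂ)).symm g‖ with hng
  have htop : ‖(WithLp.equiv 2 (k → ℂ)).symm (A *ᵥ f + B *ᵥ g)‖ ≤ c * nf + c * ng := by
    change ‖(WithLp.equiv 2 (k → ℂ)).symm (A *ᵥ f) + (WithLp.equiv 2 (k → ℂ)).symm (B *ᵥ g)‖ ≤ _
    refine (norm_add_le _ _).trans ?_
    gcongr <;> [exact hf.trans (by gcongr); exact hg.trans (by gcongr)]
  have hbot : ‖(WithLp.equiv 2 (k → ℂ)).symm (C *ᵥ f + D *ᵥ g)‖ ≤ c * nf + c * ng := by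
    change ‖(WithLp.equiv 2 (k → ℂ)).symm (C *ᵥ f) + (WithLp.equiv 2 (k → ℂ)).symm (D *ᵥ g)‖ ≤ _
    refine (norm_add_le _ _).trans ?_
    gcongr <;> [exact hf'.trans (by gcongr); exact hg'.trans (by gcongr)]
  have hsq := norm_elim_sq (A *ᵥ f + B *ᵥ g) (C *ᵥ f + D *ᵥ g)
  have hvsq : nf ^ 2 + ng ^ 2 = ‖(WithLp.equiv 2 ((k ⊕ k) → ℂ)).symm (Sum.elim f g)‖ ^ 2 :=
    (norm_elim_sq f g).symm
  have h1 : (0:ℝ) ≤ ‖(WithLp.equiv 2 ((k ⊕ k) → ℂ)).symm (Sum.elim f g)‖ := norm_nonneg _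
  have h2 : (0:ℝ) ≤ ‖(WithLp.equiv 2 ((k ⊕ k) → ℂ)).symm
      (Sum.elim (A *ᵥ f + B *ᵥ g) (C *ᵥ f + D *ᵥ g))‖ := norm_nonneg _
  have h3 : (0:ℝ) ≤ nf := norm_nonneg _
  have h4 : (0:ℝ) ≤ ng := norm_nonneg _
  have ht2 : ‖(WithLp.equiv 2 (k → ℂ)).symm (A *ᵥ f + B *ᵥ g)‖ ^ 2 ≤ (c * nf + c * ng) ^ 2 :=
    pow_le_pow_left₀ (norm_nonneg _) htop 2
  have hb2 : ‖(WithLp.equiv 2 (k → ℂ)).symm (C *ᵥ f + D *ᵥ g)‖ ^ 2 ≤ (c * nf + c * ng) ^ 2 :=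
    pow_le_pow_left₀ (norm_nonneg _) hbot 2
  set N := ‖(WithLp.equiv 2 ((k ⊕ k) → ℂ)).symm
      (Sum.elim (A *ᵥ f + B *ᵥ g) (C *ᵥ f + D *ᵥ g))‖ with hN
  set V := ‖(WithLp.equiv 2 ((k ⊕ k) → ℂ)).symm (Sum.elim f g)‖ with hV
  have hV2 : V ^ 2 = nf ^ 2 + ng ^ 2 := hvsq.symm
  have key : N ^ 2 ≤ (2 * c * V) ^ 2 := by
    rw [hsq]
    calc ‖(WithLp.equiv 2 (k → ℂ)).symm (A *ᵥ f + B *ᵥ g)‖ ^ 2 +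
        ‖(WithLp.equiv 2 (k → ℂ)).symm (C *ᵥ f + D *ᵥ g)‖ ^ 2
        ≤ 2 * (c * nf + c * ng) ^ 2 := by linarith
      _ ≤ (2 * c * V) ^ 2 := by
          rw [show (2 * c * V) ^ 2 = (2 * c) ^ 2 * V ^ 2 by ring, hV2]
          nlinarith [sq_nonneg (c * (nf - ng))]
  have h2cV : 0 ≤ 2 * c * V := by positivity
  exact le_of_pow_le_pow_left₀ two_ne_zero h2cV key

lemma charpoly_diag (d : k → ℂ) : (diagonal d).charpoly = ∏ i, (X - C (d i)) := by
  rw [Matrix.charpoly]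
  have h : charmatrix (diagonal d) = diagonal fun i => (X : ℂ[X]) - C (d i) := by
    ext i j
    by_cases h : i = j
    · subst h; simp
    · simp [charmatrix_apply_ne _ _ _ h, diagonal_apply_ne _ h]
  rw [h, det_diagonal]

lemma charpoly_conj (U V M : Matrix k k ℂ) (hUV : U * V = 1) :
    (U * M * V).charpoly = M.charpoly := by
  have hC : (C : ℂ →+* ℂ[X]).mapMatrix U * (C : ℂ →+* ℂ[X]).mapMatrix V = 1 := by
    rw [← RingHom.map_mul, hUV, _root_.map_one]
  have hcm : charmatrix (U * M * V) =
      (C : ℂ →+* ℂ[X]).mapMatrix U * charmatrix M * (C : ℂ →+* ℂ[X]).mapMatrix V := by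
    rw [charmatrix, charmatrix, mul_sub, sub_mul]
    congr 1
    · rw [show (C : ℂ →+* ℂ[X]).mapMatrix U * Matrix.scalar k (X : ℂ[X]) =
        Matrix.scalar k (X : ℂ[X]) * (C : ℂ →+* ℂ[X]).mapMatrix U from
        ((Matrix.scalar_commute (X : ℂ[X]) (fun r' => Commute.all _ _) _).eq).symm,
        mul_assoc, hC, mul_one]
    · simp [RingHom.map_mul]
  rw [Matrix.charpoly, Matrix.charpoly, hcm, det_mul, det_mul]
  have h1 : ((C : ℂ →+* ℂ[X]).mapMatrix U).det * ((C : ℂ →+* ℂ[X]).mapMatrix V).det = 1 := by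
    rw [← det_mul, hC, det_one]
  calc ((C : ℂ →+* ℂ[X]).mapMatrix U).det * (charmatrix M).det *
      ((C : ℂ →+* ℂ[X]).mapMatrix V).det
      = (charmatrix M).det * (((C : ℂ →+* ℂ[X]).mapMatrix U).det *
        ((C : ℂ →+* ℂ[X]).mapMatrix V).det) := by ring
    _ = (charmatrix M).det := by rw [h1, mul_one]

lemma hermitian_charpoly_eq {A : Matrix k k ℂ} (hA : A.IsHermitian) :
    A.charpoly = ∏ i, (X - C ((hA.eigenvalues i : ℂ))) := by
  conv_lhs => rw [hA.spectral_theorem]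
  rw [Unitary.conjStarAlgAut_apply, charpoly_conj _ _ _ ((Matrix.mem_unitaryGroup_iff).mp (hA.eigenvectorUnitary).2),
    charpoly_diag]
  rfl

lemma hermitian_charpoly_neg_eq {A : Matrix k k ℂ} (hA : A.IsHermitian) :
    (-A).charpoly = ∏ i, (X - C (-(hA.eigenvalues i : ℂ))) := by
  have h : -A = (hA.eigenvectorUnitary : Matrix k k ℂ) *
      diagonal (fun i => -((hA.eigenvalues i : ℂ))) *
      star (hA.eigenvectorUnitary : Matrix k k ℂ) := by
    conv_lhs => rw [hA.spectral_theorem]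
    rw [show (diagonal (fun i => -((hA.eigenvalues i : ℂ)))) =
      -diagonal (RCLike.ofReal ∘ hA.eigenvalues) from by rw [← diagonal_neg]; rfl]
    rw [mul_neg, neg_mul, Unitary.conjStarAlgAut_apply]
  rw [h, charpoly_conj _ _ _ ((Matrix.mem_unitaryGroup_iff).mp (hA.eigenvectorUnitary).2),
    charpoly_diag]

lemma roots_prod_X_sub (w : k → ℂ) :
    (∏ i, (X - C (w i))).roots = Finset.univ.val.map w := by
  rw [Finset.prod_eq_multiset_prod,
    show Multiset.map (fun i => X - C (w i)) Finset.univ.val =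
      Multiset.map (fun a => X - C a) (Multiset.map w Finset.univ.val) from
      by rw [Multiset.map_map]; rfl,
    Polynomial.roots_multiset_prod_X_sub_C]

lemma eig_multiset {A : Matrix k k ℂ} (hA : A.IsHermitian) (v : k → ℝ)
    (h : A.charpoly = ∏ i, (X - C ((v i : ℂ)))) :
    Finset.univ.val.map hA.eigenvalues = Finset.univ.val.map v := by
  have key : Finset.univ.val.map (fun i => (hA.eigenvalues i : ℂ)) =
      Finset.univ.val.map (fun i => (v i : ℂ)) := by
    rw [← roots_prod_X_sub (fun i => (hA.eigenvalues i : ℂ)), ← roots_prod_X_sub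
      (fun i => (v i : ℂ)), ← hermitian_charpoly_eq hA, ← h]
  apply Multiset.map_injective (f := fun x : ℝ => (x : ℂ)) Complex.ofReal_injective
  rw [Multiset.map_map, Multiset.map_map]
  exact key

lemma sphS_herm {H₁ H₂ H₃ : Matrix k k ℂ} (h1 : H₁.IsHermitian) (h2 : H₂.IsHermitian)
    (h3 : H₃.IsHermitian) : (AC.sphS H₁ H₂ H₃).IsHermitian := by
  show _ = _
  rw [AC.sphS, fromBlocks_conjTranspose]
  simp [conjTranspose_add, conjTranspose_sub, conjTranspose_smul, conjTranspose_neg,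
    h1.eq, h2.eq, h3.eq, Complex.star_def, Complex.conj_I, neg_smul, sub_eq_add_neg]

lemma conj1 (H₁ H₂ H₃ : Matrix k k ℂ) :
    AC.sphS (-H₁) H₂ H₃ =
      (fromBlocks 0 1 1 0 : Matrix (k ⊕ k) (k ⊕ k) ℂ) * (-(AC.sphS H₁ H₂ H₃)) *
        fromBlocks 0 1 1 0 := by
  simp only [AC.sphS, fromBlocks_neg, Matrix.neg_mul, fromBlocks_multiply, fromBlocks_inj]
  refine ⟨by simp, by simp; abel, by simp; abel, by simp⟩

lemma conj2 (H₁ H₂ H₃ : Matrix k k ℂ) :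
    AC.sphS H₁ (-H₂) H₃ =
      (fromBlocks 0 1 (-1) 0 : Matrix (k ⊕ k) (k ⊕ k) ℂ) * (-(AC.sphS H₁ H₂ H₃)) *
        fromBlocks 0 (-1) 1 0 := by
  simp only [AC.sphS, fromBlocks_neg, Matrix.neg_mul, fromBlocks_multiply, fromBlocks_inj]
  refine ⟨by simp, by simp [smul_neg], by simp [smul_neg]; try abel, by simp⟩

lemma conj3 (H₁ H₂ H₃ : Matrix k k ℂ) :
    AC.sphS H₁ H₂ (-H₃) =
      (fromBlocks 1 0 0 (-1) : Matrix (k ⊕ k) (k ⊕ k) ℂ) * (-(AC.sphS H₁ H₂ H₃)) *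
        fromBlocks 1 0 0 (-1) := by
  simp only [AC.sphS, fromBlocks_neg, Matrix.neg_mul, fromBlocks_multiply, fromBlocks_inj]
  refine ⟨by simp, by simp [smul_neg], by simp [smul_neg], by simp⟩

lemma unit1 : (fromBlocks 0 1 1 0 : Matrix (k ⊕ k) (k ⊕ k) ℂ) * fromBlocks 0 1 1 0 = 1 := by
  simp [fromBlocks_multiply, fromBlocks_one]

lemma unit2 : (fromBlocks 0 1 (-1) 0 : Matrix (k ⊕ k) (k ⊕ k) ℂ) * fromBlocks 0 (-1) 1 0 = 1 := by
  simp [fromBlocks_multiply, fromBlocks_one]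

lemma unit3 : (fromBlocks 1 0 0 (-1) : Matrix (k ⊕ k) (k ⊕ k) ℂ) *
    fromBlocks 1 0 0 (-1) = 1 := by
  simp [fromBlocks_multiply, fromBlocks_one]

lemma sphS_sq (H₁ H₂ H₃ : Matrix k k ℂ) :
    AC.sphS H₁ H₂ H₃ * AC.sphS H₁ H₂ H₃ =
      1 + fromBlocks ((H₁^2+H₂^2+H₃^2-1) + Complex.I • (H₁*H₂ - H₂*H₁))
        (-(H₁*H₃-H₃*H₁) + Complex.I • (H₂*H₃ - H₃*H₂))
        ((H₁*H₃-H₃*H₁) + Complex.I • (H₂*H₃ - H₃*H₂))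
        ((H₁^2+H₂^2+H₃^2-1) - Complex.I • (H₁*H₂ - H₂*H₁)) := by
  rw [show (1 : Matrix (k ⊕ k) (k ⊕ k) ℂ) = fromBlocks 1 0 0 1 from fromBlocks_one.symm]
  simp only [AC.sphS, fromBlocks_multiply, fromBlocks_add, fromBlocks_inj]
  refine ⟨?_, ?_, ?_, ?_⟩ <;>
    · simp only [mul_add, add_mul, sub_mul, mul_sub, Matrix.smul_mul, Matrix.mul_smul,
        smul_smul, mul_neg_one, neg_mul, mul_neg, Complex.I_mul_I, neg_neg, one_smul,
        mul_one, neg_one_smul, neg_smul, smul_sub, smul_add, pow_two,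
        Matrix.neg_mul, Matrix.mul_neg, sub_eq_add_neg, neg_add]
      module

lemma sphS_isUnit {δ : ℝ} (hδ : δ < 1/4) {H₁ H₂ H₃ : Matrix k k ℂ}
    (hrep : AC.IsSphereRep δ H₁ H₂ H₃) : IsUnit (AC.sphS H₁ H₂ H₃) := by
  obtain ⟨h1, h2, h3, c12, c13, c23, hE⟩ := hrep
  have c12' : ‖H₁ * H₂ - H₂ * H₁‖ ≤ δ := c12
  have c13' : ‖H₁ * H₃ - H₃ * H₁‖ ≤ δ := c13
  have c23' : ‖H₂ * H₃ - H₃ * H₂‖ ≤ δ := c23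
  have hE' : ‖H₁ ^ 2 + H₂ ^ 2 + H₃ ^ 2 - 1‖ ≤ δ := hE
  have hsmul : ∀ (A : Matrix k k ℂ), ‖Complex.I • A‖ = ‖A‖ := by
    intro A; rw [norm_smul, Complex.norm_I, one_mul]
  have nA : ‖(H₁^2+H₂^2+H₃^2-1) + Complex.I • (H₁*H₂ - H₂*H₁)‖ ≤ 2 * δ := by
    refine (norm_add_le _ _).trans ?_; rw [hsmul]; linarith
  have nB : ‖-(H₁*H₃-H₃*H₁) + Complex.I • (H₂*H₃ - H₃*H₂)‖ ≤ 2 * δ := by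
    refine (norm_add_le _ _).trans ?_; rw [hsmul, norm_neg]; linarith
  have nC : ‖(H₁*H₃-H₃*H₁) + Complex.I • (H₂*H₃ - H₃*H₂)‖ ≤ 2 * δ := by
    refine (norm_add_le _ _).trans ?_; rw [hsmul]; linarith
  have nD : ‖(H₁^2+H₂^2+H₃^2-1) - Complex.I • (H₁*H₂ - H₂*H₁)‖ ≤ 2 * δ := by
    refine (norm_sub_le _ _).trans ?_; rw [hsmul]; linarith
  have hG := norm_fromBlocks_le (2*δ) _ _ _ _ nA nB nC nD
  have hlt : ‖1 - AC.sphS H₁ H₂ H₃ * AC.sphS H₁ H₂ H₃‖ < 1 := by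
    rw [sphS_sq, sub_add_cancel_left, norm_neg]
    calc _ ≤ 2 * (2 * δ) := hG
      _ < 1 := by linarith
  haveI : CompleteSpace (Matrix (k ⊕ k) (k ⊕ k) ℂ) := FiniteDimensional.complete ℂ _
  have hu : IsUnit (AC.sphS H₁ H₂ H₃ * AC.sphS H₁ H₂ H₃) := by
    have := isUnit_one_sub_of_norm_lt_one hlt
    rwa [sub_sub_cancel] at this
  rw [Matrix.isUnit_iff_isUnit_det] at hu ⊢
  rw [det_mul] at hu
  exact isUnit_of_mul_isUnit_left hu

lemma count_filter_eq {κ : Type*} [Fintype κ] (u v : κ → ℝ)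
    (h : Finset.univ.val.map u = Finset.univ.val.map v) (p : ℝ → Prop) [DecidablePred p] :
    (Finset.univ.filter fun i => p (u i)).card = (Finset.univ.filter fun i => p (v i)).card := by
  have h2 := congrArg (Multiset.countP p) h
  rw [Multiset.countP_map, Multiset.countP_map] at h2
  rw [Finset.card_def, Finset.card_def, Finset.filter_val, Finset.filter_val]
  exact h2

lemma bott_aux {n : ℕ} {H₁ H₂ H₃ G₁ G₂ G₃ : Matrix (Fin n) (Fin n) ℂ}
    (hS : (AC.sphS H₁ H₂ H₃).IsHermitian) (hT : (AC.sphS G₁ G₂ G₃).IsHermitian)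
    (U V : Matrix (Fin n ⊕ Fin n) (Fin n ⊕ Fin n) ℂ) (hUV : U * V = 1)
    (hTS : AC.sphS G₁ G₂ G₃ = U * (-(AC.sphS H₁ H₂ H₃)) * V)
    (hunit : IsUnit (AC.sphS H₁ H₂ H₃)) :
    AC.bott G₁ G₂ G₃ = - AC.bott H₁ H₂ H₃ := by
  set μ := hS.eigenvalues with hμ
  have hchar : (AC.sphS G₁ G₂ G₃).charpoly = ∏ i, (X - C (((-μ i : ℝ) : ℂ))) := by
    rw [hTS, charpoly_conj _ _ _ hUV, hermitian_charpoly_neg_eq hS]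
    push_cast
    rfl
  have hms := eig_multiset hT _ hchar
  have hcount : (Finset.univ.filter fun i => 0 < hT.eigenvalues i).card =
      (Finset.univ.filter fun i => 0 < -μ i).card :=
    count_filter_eq _ _ hms (fun x => 0 < x)
  have hne : ∀ i, μ i ≠ 0 := by
    intro i
    have hdet : IsUnit (AC.sphS H₁ H₂ H₃).det := (Matrix.isUnit_iff_isUnit_det _).mp hunit
    rw [hS.det_eq_prod_eigenvalues] at hdet
    have h3 := isUnit_iff_ne_zero.mp hdet
    rw [Finset.prod_ne_zero_iff] at h3
    simpa [hμ] using h3 i (Finset.mem_univ i)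
  have heq2 : (Finset.univ.filter fun i => 0 < -μ i) =
      (Finset.univ.filter fun i => ¬ 0 < μ i) := by
    apply Finset.filter_congr
    intro i _
    simp only [neg_pos]
    exact ⟨fun h => not_lt.mpr h.le, fun h => ((hne i).lt_or_gt).resolve_right h⟩
  have hsplit : (Finset.univ.filter fun i => 0 < μ i).card +
      (Finset.univ.filter fun i => ¬ 0 < μ i).card = Fintype.card (Fin n ⊕ Fin n) := by
    rw [← Finset.card_univ]
    exact Finset.card_filter_add_card_filter_not _
  unfold AC.bott
  rw [dif_pos hT, dif_pos hS]
  rw [Fintype.card_sum, Fintype.card_fin] at hsplit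
  have hc1 : (Finset.univ.filter fun i => 0 < hT.eigenvalues i).card =
      (Finset.univ.filter fun i => ¬ 0 < μ i).card := by rw [hcount, heq2]
  rw [hc1, Fintype.card_fin]
  simp only [← hμ]
  push_cast
  omega

lemma opNorm_neg (A : Matrix k k ℂ) : AC.opNorm (-A) = AC.opNorm A := by
  unfold AC.opNorm
  rw [map_neg, norm_neg]

end BottNegAux

/-- Lemma (negating one matrix flips the sign of the index): if `(H₁,H₂,H₃)` is a
δ-representation of the sphere with `0 ≤ δ < 1/4`, then each of `(−H₁,H₂,H₃)`,
`(H₁,−H₂,H₃)`, `(H₁,H₂,−H₃)` is again a δ-representation of the sphere, and each has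
Bott index `−bott(H₁,H₂,H₃)`. -/
theorem bott_neg {n : ℕ} (δ : ℝ) (hδ0 : 0 ≤ δ) (hδ : δ < 1/4)
    (H₁ H₂ H₃ : Matrix (Fin n) (Fin n) ℂ)
    (hrep : AC.IsSphereRep δ H₁ H₂ H₃) :
    AC.IsSphereRep δ (-H₁) H₂ H₃ ∧
    AC.IsSphereRep δ H₁ (-H₂) H₃ ∧
    AC.IsSphereRep δ H₁ H₂ (-H₃) ∧
    AC.bott (-H₁) H₂ H₃ = -AC.bott H₁ H₂ H₃ ∧
    AC.bott H₁ (-H₂) H₃ = -AC.bott H₁ H₂ H₃ ∧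
    AC.bott H₁ H₂ (-H₃) = -AC.bott H₁ H₂ H₃ := by
  obtain ⟨h1, h2, h3, c12, c13, c23, hE⟩ := hrep
  have hrep' : AC.IsSphereRep δ H₁ H₂ H₃ := ⟨h1, h2, h3, c12, c13, c23, hE⟩
  have hrep1 : AC.IsSphereRep δ (-H₁) H₂ H₃ := by
    refine ⟨h1.neg, h2, h3, ?_, ?_, c23, ?_⟩
    · rw [show -H₁ * H₂ - H₂ * -H₁ = -(H₁ * H₂ - H₂ * H₁) by noncomm_ring,
        BottNegAux.opNorm_neg]; exact c12
    · rw [show -H₁ * H₃ - H₃ * -H₁ = -(H₁ * H₃ - H₃ * H₁) by noncomm_ring,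
        BottNegAux.opNorm_neg]; exact c13
    · rw [show (-H₁) ^ 2 = H₁ ^ 2 by noncomm_ring]; exact hE
  have hrep2 : AC.IsSphereRep δ H₁ (-H₂) H₃ := by
    refine ⟨h1, h2.neg, h3, ?_, c13, ?_, ?_⟩
    · rw [show H₁ * -H₂ - -H₂ * H₁ = -(H₁ * H₂ - H₂ * H₁) by noncomm_ring,
        BottNegAux.opNorm_neg]; exact c12
    · rw [show -H₂ * H₃ - H₃ * -H₂ = -(H₂ * H₃ - H₃ * H₂) by noncomm_ring,
        BottNegAux.opNorm_neg]; exact c23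
    · rw [show H₁ ^ 2 + (-H₂) ^ 2 + H₃ ^ 2 - 1 = H₁ ^ 2 + H₂ ^ 2 + H₃ ^ 2 - 1 by noncomm_ring]
      exact hE
  have hrep3 : AC.IsSphereRep δ H₁ H₂ (-H₃) := by
    refine ⟨h1, h2, h3.neg, c12, ?_, ?_, ?_⟩
    · rw [show H₁ * -H₃ - -H₃ * H₁ = -(H₁ * H₃ - H₃ * H₁) by noncomm_ring,
        BottNegAux.opNorm_neg]; exact c13
    · rw [show H₂ * -H₃ - -H₃ * H₂ = -(H₂ * H₃ - H₃ * H₂) by noncomm_ring,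
        BottNegAux.opNorm_neg]; exact c23
    · rw [show H₁ ^ 2 + H₂ ^ 2 + (-H₃) ^ 2 - 1 = H₁ ^ 2 + H₂ ^ 2 + H₃ ^ 2 - 1 by noncomm_ring]
      exact hE
  have hS := BottNegAux.sphS_herm h1 h2 h3
  have hT1 := BottNegAux.sphS_herm h1.neg h2 h3
  have hT2 := BottNegAux.sphS_herm h1 h2.neg h3
  have hT3 := BottNegAux.sphS_herm h1 h2 h3.neg
  have hunit := BottNegAux.sphS_isUnit hδ hrep'
  exact ⟨hrep1, hrep2, hrep3,
    BottNegAux.bott_aux hS hT1 _ _ BottNegAux.unit1 (BottNegAux.conj1 H₁ H₂ H₃) hunit,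
    BottNegAux.bott_aux hS hT2 _ _ BottNegAux.unit2 (BottNegAux.conj2 H₁ H₂ H₃) hunit,
    BottNegAux.bott_aux hS hT3 _ _ BottNegAux.unit3 (BottNegAux.conj3 H₁ H₂ H₃) hunit⟩
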